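/- Let (Ω, ℱ, P) be a probability space with a filtration (ℱ_k)_{k∈ℕ}, let N ∈ ℕ, and let τ be a stopping time with τ ≤ N almost surely. Let (V_k)_{k=0}^{N}, (f_k)_{k=0}^{N}, (q_k)_{k=0}^{N} be adapted real-valued processes, each bounded by a constant, with V_k ≥ 0, f_k ≥ 0 and q_k ≥ 1 almost surely for every k. Suppose that for every k < N, almost surely on the event {k < τ}: q_k · E[V_{k+1} | ℱ_k] − V_k ≤ −f_k. Then E[ ∑_{k=0}^{τ−1} f_k ∏_{j=0}^{k−1} q_j ] ≤ E[V_0], where the empty product equals 1. -/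

import Mathlib

open MeasureTheory

/-- Stopped comparison (discrete maximum) principle behind Lemma 5.6 and
Corollary 5.7: if `q_k E[V_{k+1} | ℱ_k] − V_k ≤ −f_k` on `{k < τ}`, then the
expected weighted additive functional up to the stopping time `τ` is bounded by
the initial barrier value `E[V_0]`. -/
theorem stopped_comparison_principle {Ω : Type*} {m : MeasurableSpace Ω}
    (P : Measure Ω) [IsProbabilityMeasure P] (ℱ : Filtration ℕ m) (N : ℕ)
    (τ : Ω → ℕ) (hτ : IsStoppingTime ℱ (fun ω => (τ ω : WithTop ℕ))) (hτN : ∀ ω, τ ω ≤ N)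
    (V f q : ℕ → Ω → ℝ)
    (hV : Adapted ℱ V) (hf : Adapted ℱ f) (hq : Adapted ℱ q)
    (Cb : ℝ) (hVb : ∀ k ω, |V k ω| ≤ Cb) (hfb : ∀ k ω, |f k ω| ≤ Cb)
    (hqb : ∀ k ω, |q k ω| ≤ Cb)
    (hVpos : ∀ k ω, 0 ≤ V k ω) (hfpos : ∀ k ω, 0 ≤ f k ω)
    (hq1 : ∀ k ω, 1 ≤ q k ω)
    (hstep : ∀ k < N, ∀ᵐ ω ∂P, k < τ ω →
      q k ω * (P[V (k + 1)|ℱ k]) ω - V k ω ≤ -f k ω) :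
    ∫ ω, (∑ k ∈ Finset.range (τ ω), f k ω * ∏ j ∈ Finset.range k, q j ω) ∂P
      ≤ ∫ ω, V 0 ω ∂P := by
  classical
  -- Ω is nonempty since P is a probability measure
  have hΩ : Nonempty Ω := by
    by_contra hc
    rw [not_nonempty_iff] at hc
    have h1 : P Set.univ = 1 := measure_univ
    rw [Set.univ_eq_empty_iff.mpr hc, measure_empty] at h1
    exact zero_ne_one h1
  obtain ⟨ω₀⟩ := hΩ
  have hCb1 : (1:ℝ) ≤ Cb := le_trans (hq1 0 ω₀) ((le_abs_self _).trans (hqb 0 ω₀))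
  have hCb0 : (0:ℝ) ≤ Cb := le_trans zero_le_one hCb1
  set Q : ℕ → Ω → ℝ := fun n ω => ∏ j ∈ Finset.range n, q j ω with hQdef
  have hQnonneg : ∀ n ω, 0 ≤ Q n ω := fun n ω =>
    Finset.prod_nonneg fun j _ => le_trans zero_le_one (hq1 j ω)
  have hQb : ∀ n ω, |Q n ω| ≤ Cb ^ n := by
    intro n ω
    have h1 : |Q n ω| = ∏ j ∈ Finset.range n, |q j ω| := Finset.abs_prod _ _
    rw [h1]
    calc ∏ j ∈ Finset.range n, |q j ω| ≤ ∏ _j ∈ Finset.range n, Cb :=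
          Finset.prod_le_prod (fun j _ => abs_nonneg _) (fun j _ => hqb j ω)
      _ = Cb ^ n := by rw [Finset.prod_const, Finset.card_range]
  -- measurability
  have hVm : ∀ k, StronglyMeasurable (V k) := fun k => ((hV k).mono (ℱ.le k) le_rfl).stronglyMeasurable
  have hfm : ∀ k, StronglyMeasurable (f k) := fun k => ((hf k).mono (ℱ.le k) le_rfl).stronglyMeasurable
  have hqm : ∀ k, StronglyMeasurable (q k) := fun k => ((hq k).mono (ℱ.le k) le_rfl).stronglyMeasurable
  have hQm : ∀ n, StronglyMeasurable (Q n) := fun n =>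
    Finset.stronglyMeasurable_fun_prod _ (fun j _ => hqm j)
  have hQmF : ∀ n, StronglyMeasurable[ℱ n] (Q n) := fun n =>
    Finset.stronglyMeasurable_fun_prod _
      (fun j hj => ((hq j).mono (ℱ.mono (le_of_lt (Finset.mem_range.mp hj))) le_rfl).stronglyMeasurable)
  have hSm : ∀ n, MeasurableSet[ℱ n] {ω | n < τ ω} := by
    intro n
    have h1 : {ω | n < τ ω} = {ω | τ ω ≤ n}ᶜ := by ext ω; simp [not_le]
    have h2 : {ω | τ ω ≤ n} = {ω | (τ ω : WithTop ℕ) ≤ (n : WithTop ℕ)} := by ext ω; simp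
    rw [h1, h2]
    exact (hτ n).compl
  have hSmm : ∀ n, MeasurableSet {ω | n < τ ω} := fun n => (ℱ.le n) _ (hSm n)
  -- integrability helper
  have integ_of_bdd : ∀ (g : Ω → ℝ) (C : ℝ), StronglyMeasurable g → (∀ ω, |g ω| ≤ C) →
      Integrable g P := fun g C hg hb =>
    Integrable.mono' (integrable_const C) hg.aestronglyMeasurable
      (Filter.Eventually.of_forall fun ω => by simpa [Real.norm_eq_abs] using hb ω)
  have habs_ind : ∀ (s : Set Ω) (g : Ω → ℝ) (C : ℝ), 0 ≤ C → (∀ ω, |g ω| ≤ C) →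
      ∀ ω, |Set.indicator s g ω| ≤ C := by
    intro s g C hC hg ω
    rw [Set.indicator_apply]
    split_ifs with h
    · exact hg ω
    · simpa using hC
  -- the increments
  set D : ℕ → Ω → ℝ := fun n => Set.indicator {ω | n < τ ω}
    (fun ω => Q n ω * (q n ω * V (n+1) ω - V n ω + f n ω)) with hDdef
  have hinner : ∀ n ω, |Q n ω * (q n ω * V (n+1) ω - V n ω + f n ω)|
      ≤ Cb ^ n * (Cb * Cb + Cb + Cb) := by
    intro n ω
    rw [abs_mul]
    refine mul_le_mul (hQb n ω) ?_ (abs_nonneg _) (pow_nonneg hCb0 n)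
    have h1 : |q n ω * V (n+1) ω - V n ω + f n ω|
        ≤ |q n ω * V (n+1) ω - V n ω| + |f n ω| := abs_add_le _ _
    have h2 : |q n ω * V (n+1) ω - V n ω| ≤ |q n ω * V (n+1) ω| + |V n ω| := abs_sub _ _
    have h3 : |q n ω * V (n+1) ω| ≤ Cb * Cb := by
      rw [abs_mul]
      exact mul_le_mul (hqb n ω) (hVb _ ω) (abs_nonneg _) hCb0
    have h4 := hVb n ω
    have h5 := hfb n ω
    linarith
  have hDm : ∀ n, StronglyMeasurable (D n) := by
    intro n
    exact (((hQm n).mul ((((hqm n).mul (hVm (n+1))).sub (hVm n)).add (hfm n)))).indicator (hSmm n)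
  have hDb : ∀ n ω, |D n ω| ≤ Cb ^ n * (Cb * Cb + Cb + Cb) := by
    intro n
    exact habs_ind _ _ _ (by positivity) (hinner n)
  have hDint : ∀ n, Integrable (D n) P := fun n =>
    integ_of_bdd _ _ (hDm n) (hDb n)
  -- pointwise identity
  have hpt : ∀ ω n, V 0 ω + ∑ i ∈ Finset.range n, D i ω
      = V (min n (τ ω)) ω * Q (min n (τ ω)) ω
        + ∑ k ∈ Finset.range (min n (τ ω)), f k ω * Q k ω := by
    intro ω n
    induction n with
    | zero => simp [hQdef]
    | succ n ih =>
      rw [Finset.sum_range_succ, ← add_assoc, ih]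
      by_cases h : n < τ ω
      · have h1 : min n (τ ω) = n := min_eq_left (le_of_lt h)
        have h2 : min (n+1) (τ ω) = n+1 := min_eq_left h
        have h3 : D n ω = Q n ω * (q n ω * V (n+1) ω - V n ω + f n ω) :=
          Set.indicator_of_mem (show ω ∈ {ω' | n < τ ω'} from h) _
        have h4 : Q (n+1) ω = Q n ω * q n ω := Finset.prod_range_succ _ _
        rw [h1, h2, h3, Finset.sum_range_succ, h4]
        ring
      · have h0 : τ ω ≤ n := le_of_not_gt h
        have h1 : min n (τ ω) = τ ω := min_eq_right h0
        have h2 : min (n+1) (τ ω) = τ ω := min_eq_right (le_trans h0 (Nat.le_succ n))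
        have h3 : D n ω = 0 := Set.indicator_of_notMem (show ω ∉ {ω' | n < τ ω'} from h) _
        rw [h1, h2, h3, add_zero]
  -- the comparison
  have hge : ∀ ω, (∑ k ∈ Finset.range (τ ω), f k ω * Q k ω)
      ≤ V 0 ω + ∑ i ∈ Finset.range N, D i ω := by
    intro ω
    have h1 := hpt ω N
    rw [min_eq_right (hτN ω)] at h1
    have h2 : 0 ≤ V (τ ω) ω * Q (τ ω) ω := mul_nonneg (hVpos _ _) (hQnonneg _ _)
    linarith
  -- each increment has nonpositive expectation
  have hDle : ∀ n < N, ∫ ω, D n ω ∂P ≤ 0 := by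
    intro n hn
    set g : Ω → ℝ := Set.indicator {ω | n < τ ω} (fun ω => Q n ω * q n ω) with hgdef
    set h : Ω → ℝ := Set.indicator {ω | n < τ ω} (fun ω => Q n ω * (f n ω - V n ω)) with hhdef
    have hDeq : ∀ ω, D n ω = g ω * V (n+1) ω + h ω := by
      intro ω
      by_cases hω : n < τ ω
      · have e1 : D n ω = Q n ω * (q n ω * V (n+1) ω - V n ω + f n ω) :=
          Set.indicator_of_mem (show ω ∈ {ω' | n < τ ω'} from hω) _
        have e2 : g ω = Q n ω * q n ω :=
          Set.indicator_of_mem (show ω ∈ {ω' | n < τ ω'} from hω) _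
        have e3 : h ω = Q n ω * (f n ω - V n ω) :=
          Set.indicator_of_mem (show ω ∈ {ω' | n < τ ω'} from hω) _
        rw [e1, e2, e3]; ring
      · have e1 : D n ω = 0 :=
          Set.indicator_of_notMem (show ω ∉ {ω' | n < τ ω'} from hω) _
        have e2 : g ω = 0 :=
          Set.indicator_of_notMem (show ω ∉ {ω' | n < τ ω'} from hω) _
        have e3 : h ω = 0 :=
          Set.indicator_of_notMem (show ω ∉ {ω' | n < τ ω'} from hω) _
        rw [e1, e2, e3]; ring
    have hgF : StronglyMeasurable[ℱ n] g := ((hQmF n).mul (hq n).stronglyMeasurable).indicator (hSm n)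
    have hgm : StronglyMeasurable g := hgF.mono (ℱ.le n)
    have hgb : ∀ ω, |g ω| ≤ Cb ^ n * Cb := by
      refine habs_ind _ _ _ (by positivity) ?_
      intro ω
      rw [abs_mul]
      exact mul_le_mul (hQb n ω) (hqb n ω) (abs_nonneg _) (pow_nonneg hCb0 n)
    have hhm : StronglyMeasurable h :=
      ((hQm n).mul ((hfm n).sub (hVm n))).indicator (hSmm n)
    have hhb : ∀ ω, |h ω| ≤ Cb ^ n * (Cb + Cb) := by
      refine habs_ind _ _ _ (by positivity) ?_
      intro ω
      rw [abs_mul]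
      refine mul_le_mul (hQb n ω) ?_ (abs_nonneg _) (pow_nonneg hCb0 n)
      have := abs_sub (f n ω) (V n ω)
      have := hfb n ω
      have := hVb n ω
      linarith
    have hintV : Integrable (V (n+1)) P := integ_of_bdd _ Cb (hVm _) (fun ω => hVb _ ω)
    have hint1 : Integrable (fun ω => g ω * V (n+1) ω) P := by
      refine integ_of_bdd _ (Cb ^ n * Cb * Cb) ((hgm.mul (hVm (n+1)))) ?_
      intro ω
      rw [abs_mul]
      exact mul_le_mul (hgb ω) (hVb _ ω) (abs_nonneg _) (by positivity)
    have hintH : Integrable h P := integ_of_bdd _ _ hhm hhb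
    have hpull : P[g * V (n+1) | ℱ n] =ᵐ[P] g * (P[V (n+1)|ℱ n]) :=
      condExp_mul_of_stronglyMeasurable_left hgF hint1 hintV
    have hintgE : Integrable (fun ω => g ω * (P[V (n+1)|ℱ n]) ω) P :=
      Integrable.bdd_mul (c := Cb ^ n * Cb) integrable_condExp hgm.aestronglyMeasurable
        (Filter.Eventually.of_forall fun ω => by simpa [Real.norm_eq_abs] using hgb ω)
    have hi1 : ∫ ω, g ω * V (n+1) ω ∂P = ∫ ω, g ω * (P[V (n+1)|ℱ n]) ω ∂P := by
      have e1 : ∫ ω, (P[g * V (n+1) | ℱ n]) ω ∂P = ∫ ω, (g * V (n+1)) ω ∂P :=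
        integral_condExp (ℱ.le n)
      have e2 : ∫ ω, (P[g * V (n+1) | ℱ n]) ω ∂P
          = ∫ ω, (g * (P[V (n+1)|ℱ n])) ω ∂P := integral_congr_ae hpull
      calc ∫ ω, g ω * V (n+1) ω ∂P = ∫ ω, (g * V (n+1)) ω ∂P := rfl
        _ = ∫ ω, (g * (P[V (n+1)|ℱ n])) ω ∂P := by rw [← e1, e2]
        _ = ∫ ω, g ω * (P[V (n+1)|ℱ n]) ω ∂P := rfl
    calc ∫ ω, D n ω ∂P = ∫ ω, (g ω * V (n+1) ω + h ω) ∂P :=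
          integral_congr_ae (Filter.Eventually.of_forall hDeq)
      _ = (∫ ω, g ω * V (n+1) ω ∂P) + ∫ ω, h ω ∂P := integral_add hint1 hintH
      _ = (∫ ω, g ω * (P[V (n+1)|ℱ n]) ω ∂P) + ∫ ω, h ω ∂P := by rw [hi1]
      _ = ∫ ω, (g ω * (P[V (n+1)|ℱ n]) ω + h ω) ∂P := (integral_add hintgE hintH).symm
      _ ≤ 0 := by
          apply integral_nonpos_of_ae
          filter_upwards [hstep n hn] with ω hω
          by_cases hmem : n < τ ω
          · have hst := hω hmem
            have e2 : g ω = Q n ω * q n ω :=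
              Set.indicator_of_mem (show ω ∈ {ω' | n < τ ω'} from hmem) _
            have e3 : h ω = Q n ω * (f n ω - V n ω) :=
              Set.indicator_of_mem (show ω ∈ {ω' | n < τ ω'} from hmem) _
            have hb : q n ω * (P[V (n+1)|ℱ n]) ω - V n ω + f n ω ≤ 0 := by linarith
            have hQ0 := hQnonneg n ω
            calc g ω * (P[V (n+1)|ℱ n]) ω + h ω
                = Q n ω * (q n ω * (P[V (n+1)|ℱ n]) ω - V n ω + f n ω) := by
                  rw [e2, e3]; ring
              _ ≤ 0 := mul_nonpos_iff.mpr (Or.inl ⟨hQ0, hb⟩)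
          · have e2 : g ω = 0 :=
              Set.indicator_of_notMem (show ω ∉ {ω' | n < τ ω'} from hmem) _
            have e3 : h ω = 0 :=
              Set.indicator_of_notMem (show ω ∉ {ω' | n < τ ω'} from hmem) _
            rw [e2, e3]
            simp
  -- integrability of both sides
  have hseq : ∀ ω, (∑ k ∈ Finset.range (τ ω), f k ω * Q k ω)
      = ∑ k ∈ Finset.range N,
          Set.indicator {ω' | k < τ ω'} (fun ω' => f k ω' * Q k ω') ω := by
    intro ω
    calc ∑ k ∈ Finset.range (τ ω), f k ω * Q k ω
        = ∑ k ∈ Finset.range (τ ω),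
            Set.indicator {ω' | k < τ ω'} (fun ω' => f k ω' * Q k ω') ω :=
          Finset.sum_congr rfl fun k hk =>
            (Set.indicator_of_mem (show ω ∈ {ω' | k < τ ω'} from Finset.mem_range.mp hk)
              (fun ω' => f k ω' * Q k ω')).symm
      _ = ∑ k ∈ Finset.range N,
            Set.indicator {ω' | k < τ ω'} (fun ω' => f k ω' * Q k ω') ω :=
          Finset.sum_subset (Finset.range_subset_range.mpr (hτN ω))
            (fun k _ hk => Set.indicator_of_notMem
              (show ω ∉ {ω' | k < τ ω'} by simpa using hk) _)
  have hLHSeq : (fun ω => ∑ k ∈ Finset.range (τ ω), f k ω * Q k ω)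
      = fun ω => ∑ k ∈ Finset.range N,
          Set.indicator {ω' | k < τ ω'} (fun ω' => f k ω' * Q k ω') ω := funext hseq
  have hLHSint : Integrable (fun ω => ∑ k ∈ Finset.range (τ ω), f k ω * Q k ω) P := by
    rw [hLHSeq]
    apply integrable_finset_sum
    intro k _
    refine integ_of_bdd _ (Cb * Cb ^ k) (((hfm k).mul (hQm k)).indicator (hSmm k)) ?_
    refine habs_ind _ _ _ (by positivity) ?_
    intro ω
    rw [abs_mul]
    exact mul_le_mul (hfb k ω) (hQb k ω) (abs_nonneg _) hCb0
  have hV0int : Integrable (V 0) P := integ_of_bdd _ Cb (hVm 0) (fun ω => hVb 0 ω)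
  have hsumDint : Integrable (fun ω => ∑ i ∈ Finset.range N, D i ω) P :=
    integrable_finset_sum _ (fun i _ => hDint i)
  have hRHSint : Integrable (fun ω => V 0 ω + ∑ i ∈ Finset.range N, D i ω) P :=
    hV0int.add hsumDint
  calc ∫ ω, ∑ k ∈ Finset.range (τ ω), f k ω * Q k ω ∂P
      ≤ ∫ ω, (V 0 ω + ∑ i ∈ Finset.range N, D i ω) ∂P :=
        integral_mono hLHSint hRHSint hge
    _ = (∫ ω, V 0 ω ∂P) + ∫ ω, ∑ i ∈ Finset.range N, D i ω ∂P :=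
        integral_add hV0int hsumDint
    _ = (∫ ω, V 0 ω ∂P) + ∑ i ∈ Finset.range N, ∫ ω, D i ω ∂P := by
        rw [integral_finset_sum _ (fun i _ => hDint i)]
    _ ≤ ∫ ω, V 0 ω ∂P := by
        have hs : ∑ i ∈ Finset.range N, ∫ ω, D i ω ∂P ≤ 0 :=
          Finset.sum_nonpos fun i hi => hDle i (Finset.mem_range.mp hi)
        linarith
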